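/- Let k ≥ 1 and let v_1,…,v_n be independent nonnegative real random variables with atomless distributions. Let T ∈ ℝ be a threshold satisfying Pr[max_{1≤i≤n} v_i < T] = (2/3)^{k−1}, and let S be the set consisting of the first (in the order i = 1,…,n) at most k indices i with v_i > T. Then E[max_{i∈S} v_i] ≥ (1 − (3/2)·e^{−k/6}) · E[max_{1≤i≤n} v_i], where the maximum over the empty set is 0. -/

import Mathlib

open MeasureTheory ProbabilityTheory Finset

/-- The maximum of `v` over the finite set `A`, with the convention that the maximum
over the empty set is `0`. -/
noncomputable def maxVal {n : ℕ} (A : Finset (Fin n)) (v : Fin n → ℝ) : ℝ :=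
  WithBot.unbotD 0 ((A.image v).max)

/-- The set of the first (at most) `k` indices `i` (in increasing order) with `v i > T`. -/
noncomputable def acceptSet {n : ℕ} (k : ℕ) (T : ℝ) (v : Fin n → ℝ) : Finset (Fin n) :=
  Finset.univ.filter fun i =>
    T < v i ∧ (Finset.univ.filter fun j => j < i ∧ T < v j).card < k

set_option linter.unusedVariables false

namespace AlgMaxAux
set_option linter.unusedSectionVars false

variable {Ω : Type*} [MeasurableSpace Ω] {μ : Measure Ω} [IsProbabilityMeasure μ]
variable {n : ℕ} {v : Fin n → Ω → ℝ}

def CC (v : Fin n → Ω → ℝ) (J : Finset (Fin n)) (t : ℝ) : Set Ω := {ω | ∀ l ∈ J, v l ω ≤ t}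
def BB (v : Fin n → Ω → ℝ) (J : Finset (Fin n)) (T : ℝ) (k : ℕ) : Set Ω :=
  {ω | k ≤ (J.filter fun l => T < v l ω).card}
def mJ (v : Fin n → Ω → ℝ) (J : Finset (Fin n)) : MeasurableSpace Ω :=
  ⨆ l ∈ J, MeasurableSpace.comap (v l) inferInstance

lemma le_mJ {J : Finset (Fin n)} {l : Fin n} (hl : l ∈ J) :
    MeasurableSpace.comap (v l) inferInstance ≤ mJ v J :=
  le_iSup₂ (f := fun l (_ : l ∈ J) => MeasurableSpace.comap (v l) inferInstance) l hl

lemma mJ_le (hmeas : ∀ i, Measurable (v i)) (J : Finset (Fin n)) :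
    mJ v J ≤ (inferInstance : MeasurableSpace Ω) :=
  iSup₂_le fun l _ => (hmeas l).comap_le

lemma measurableSet_CC {J : Finset (Fin n)} {t : ℝ} : MeasurableSet[mJ v J] (CC v J t) := by
  have : CC v J t = ⋂ l ∈ J, v l ⁻¹' Set.Iic t := by
    ext ω; simp [CC, Set.mem_iInter]
  rw [this]
  exact MeasurableSet.biInter J.countable_toSet fun l hl =>
    le_mJ hl _ ⟨Set.Iic t, measurableSet_Iic, rfl⟩

lemma BB_eq_union {J : Finset (Fin n)} {T : ℝ} {k : ℕ} :
    BB v J T k = ⋃ K ∈ J.powerset.filter (fun K => K.card = k), ⋂ l ∈ K, v l ⁻¹' Set.Ioi T := by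
  ext ω
  simp only [BB, Set.mem_setOf_eq, Set.mem_iUnion, Set.mem_iInter, Finset.mem_filter,
    Finset.mem_powerset, Set.mem_preimage, Set.mem_Ioi, exists_prop]
  constructor
  · intro h
    obtain ⟨K, hKsub, hKcard⟩ := Finset.exists_subset_card_eq h
    exact ⟨K, ⟨hKsub.trans (Finset.filter_subset _ _), hKcard⟩,
      fun l hl => (Finset.mem_filter.1 (hKsub hl)).2⟩
  · rintro ⟨K, ⟨hKJ, hKcard⟩, hK⟩
    have hsub : K ⊆ J.filter fun l => T < v l ω := fun l hl =>
      Finset.mem_filter.2 ⟨hKJ hl, hK l hl⟩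
    calc k = K.card := hKcard.symm
    _ ≤ _ := Finset.card_le_card hsub

lemma measurableSet_BB {J : Finset (Fin n)} {T : ℝ} {k : ℕ} :
    MeasurableSet[mJ v J] (BB v J T k) := by
  rw [BB_eq_union]
  refine MeasurableSet.biUnion (Finset.countable_toSet _) fun K hK => ?_
  have hKJ : K ⊆ J := Finset.mem_powerset.1 (Finset.mem_filter.1 hK).1
  exact MeasurableSet.biInter K.countable_toSet fun l hl =>
    le_mJ (hKJ hl) _ ⟨Set.Ioi T, measurableSet_Ioi, rfl⟩

lemma indep_extract (hmeas : ∀ i, Measurable (v i))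
    (hindep : iIndepFun v μ)
    {j : Fin n} {J : Finset (Fin n)} (hj : j ∉ J) {S : Set ℝ} (hS : MeasurableSet S)
    {X : Set Ω} (hX : MeasurableSet[mJ v J] X) :
    μ (v j ⁻¹' S ∩ X) = μ (v j ⁻¹' S) * μ X := by
  have hii : iIndep (fun i => MeasurableSpace.comap (v i) inferInstance) μ :=
    (iIndepFun_iff_iIndep _ _ _).1 hindep
  have h_le : ∀ i, MeasurableSpace.comap (v i) inferInstance ≤ _ := fun i => (hmeas i).comap_le
  have h := indep_biSup_compl h_le hii {j}
  have h1 : (⨆ l ∈ ({j} : Set (Fin n)), MeasurableSpace.comap (v l) inferInstance)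
      = MeasurableSpace.comap (v j) inferInstance := by simp
  rw [h1] at h
  have h2 : mJ v J ≤ ⨆ l ∈ ({j} : Set (Fin n))ᶜ, MeasurableSpace.comap (v l) inferInstance := by
    refine iSup₂_le fun l hl => ?_
    have hlj : l ∈ ({j} : Set (Fin n))ᶜ := by
      simp only [Set.mem_compl_iff, Set.mem_singleton_iff]
      rintro rfl; exact hj hl
    exact le_iSup₂ (f := fun l (_ : l ∈ ({j} : Set (Fin n))ᶜ) =>
      MeasurableSpace.comap (v l) inferInstance) l hlj
  have h' := indep_of_indep_of_le_right h h2
  exact (Indep_iff _ _ _).1 h' _ _ ⟨S, hS, rfl⟩ hX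

lemma CC_insert {J : Finset (Fin n)} {j : Fin n} {t : ℝ} :
    CC v (insert j J) t = v j ⁻¹' Set.Iic t ∩ CC v J t := by
  ext ω; simp [CC, Set.mem_preimage]

lemma BB_insert {J : Finset (Fin n)} {j : Fin n} (hj : j ∉ J) {T : ℝ} {k : ℕ} :
    BB v (insert j J) T (k+1) =
      (v j ⁻¹' Set.Ioi T ∩ BB v J T k) ∪ (v j ⁻¹' Set.Iic T ∩ BB v J T (k+1)) := by
  ext ω
  have hjf : j ∉ J.filter fun l => T < v l ω := fun hc => hj (Finset.mem_of_mem_filter _ hc)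
  by_cases h : T < v j ω
  · simp only [BB, Set.mem_setOf_eq, Finset.filter_insert, if_pos h,
      Finset.card_insert_of_notMem hjf, Set.mem_union, Set.mem_inter_iff, Set.mem_preimage,
      Set.mem_Ioi, Set.mem_Iic]
    constructor
    · intro hc; exact Or.inl ⟨h, Nat.succ_le_succ_iff.1 hc⟩
    · rintro (⟨-, hc⟩ | ⟨hc, -⟩)
      · exact Nat.succ_le_succ hc
      · exact absurd h (not_lt.2 hc)
  · simp only [BB, Set.mem_setOf_eq, Finset.filter_insert, if_neg h, Set.mem_union,
      Set.mem_inter_iff, Set.mem_preimage, Set.mem_Ioi, Set.mem_Iic]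
    constructor
    · intro hc; exact Or.inr ⟨not_lt.1 h, hc⟩
    · rintro (⟨hc, -⟩ | ⟨-, hc⟩)
      · exact absurd hc h
      · exact hc

lemma BB_zero {J : Finset (Fin n)} {T : ℝ} : BB v J T 0 = Set.univ := by
  ext ω; simp [BB]

lemma BB_empty_succ {T : ℝ} {k : ℕ} : BB v (∅ : Finset (Fin n)) T (k+1) = ∅ := by
  ext ω; simp [BB]

lemma BB_succ_subset {J : Finset (Fin n)} {T : ℝ} {k : ℕ} : BB v J T (k+1) ⊆ BB v J T k :=
  fun ω h => le_trans (Nat.le_succ k) h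

lemma onedim_harris (hm : ∀ i, Measurable (v i)) (j : Fin n) (T t : ℝ) :
    μ (v j ⁻¹' Set.Ioc T t) ≤ μ (v j ⁻¹' Set.Iic t) * μ (v j ⁻¹' Set.Ioi T) := by
  rcases le_or_gt t T with h | h
  · rw [Set.Ioc_eq_empty (not_lt.2 h)]; simp
  · set a := μ (v j ⁻¹' Set.Ioi T) with ha
    set σ := μ (v j ⁻¹' Set.Iic t) with hσ
    have ha1 : a ≤ 1 := prob_le_one
    have hσ1 : σ ≤ 1 := prob_le_one
    have hIicT : μ (v j ⁻¹' Set.Iic T) = 1 - a := by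
      have hc : v j ⁻¹' Set.Iic T = (v j ⁻¹' Set.Ioi T)ᶜ := by
        rw [← Set.preimage_compl, Set.compl_Ioi]
      rw [hc, measure_compl ((hm j) measurableSet_Ioi) (measure_ne_top μ _), measure_univ]
    have hdiff : v j ⁻¹' Set.Ioc T t = v j ⁻¹' Set.Iic t \ v j ⁻¹' Set.Iic T := by
      ext ω; simp only [Set.mem_preimage, Set.mem_Ioc, Set.mem_diff, Set.mem_Iic, not_le]; tauto
    have hsub : v j ⁻¹' Set.Iic T ⊆ v j ⁻¹' Set.Iic t :=
      Set.preimage_mono (Set.Iic_subset_Iic.2 h.le)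
    rw [hdiff, measure_diff hsub (((hm j) measurableSet_Iic).nullMeasurableSet)
      (measure_ne_top μ _), hIicT]
    rw [tsub_le_iff_right]
    calc σ = σ * (a + (1 - a)) := by rw [add_tsub_cancel_of_le ha1, mul_one]
    _ = σ * a + σ * (1 - a) := by rw [mul_add]
    _ ≤ σ * a + 1 * (1 - a) := by gcongr
    _ = σ * a + (1 - a) := by rw [one_mul]

lemma compl_Ioi_pre (j : Fin n) (T : ℝ) : v j ⁻¹' Set.Iic T = (v j ⁻¹' Set.Ioi T)ᶜ := by
  rw [← Set.preimage_compl, Set.compl_Ioi]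

lemma harris (hmeas : ∀ i, Measurable (v i))
    (hindep : iIndepFun v μ)
    (T t : ℝ) (J : Finset (Fin n)) :
    ∀ k : ℕ, μ (CC v J t ∩ BB v J T k) ≤ μ (CC v J t) * μ (BB v J T k) := by
  induction J using Finset.induction_on with
  | empty =>
    intro k
    cases k with
    | zero =>
      rw [BB_zero]
      have : CC v (∅ : Finset (Fin n)) t = Set.univ := by ext ω; simp [CC]
      rw [this]; simp
    | succ k => rw [BB_empty_succ]; simp
  | @insert j J hj ih =>
    intro k
    cases k with
    | zero => rw [BB_zero, Set.inter_univ, measure_univ, mul_one]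
    | succ k =>
      have hle := mJ_le (v := v) hmeas J
      have hCCm : MeasurableSet[mJ v J] (CC v J t) := measurableSet_CC
      have hBBk : MeasurableSet[mJ v J] (BB v J T k) := measurableSet_BB
      have hBBk1 : MeasurableSet[mJ v J] (BB v J T (k+1)) := measurableSet_BB
      have hsplit : CC v (insert j J) t ∩ BB v (insert j J) T (k+1)
          = (v j ⁻¹' Set.Ioc T t ∩ (CC v J t ∩ BB v J T k))
            ∪ (v j ⁻¹' Set.Iic (min T t) ∩ (CC v J t ∩ BB v J T (k+1))) := by
        rw [CC_insert, BB_insert hj]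
        ext ω
        simp only [Set.mem_inter_iff, Set.mem_union, Set.mem_preimage, Set.mem_Iic, Set.mem_Ioc,
          Set.mem_Ioi, le_min_iff]
        tauto
      have hdisj : Disjoint (v j ⁻¹' Set.Ioc T t ∩ (CC v J t ∩ BB v J T k))
          (v j ⁻¹' Set.Iic (min T t) ∩ (CC v J t ∩ BB v J T (k+1))) := by
        refine Set.disjoint_left.2 ?_
        rintro ω ⟨h1, -⟩ ⟨h2, -⟩
        simp only [Set.mem_preimage, Set.mem_Ioc, Set.mem_Iic, le_min_iff] at h1 h2
        exact absurd h2.1 (not_le.2 h1.1)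
      rw [hsplit, measure_union hdisj
        (((hmeas j) measurableSet_Iic).inter (hle _ (hCCm.inter hBBk1)))]
      rw [indep_extract hmeas hindep hj measurableSet_Ioc (hCCm.inter hBBk),
        indep_extract hmeas hindep hj measurableSet_Iic (hCCm.inter hBBk1)]
      have hCCins : μ (CC v (insert j J) t) = μ (v j ⁻¹' Set.Iic t) * μ (CC v J t) := by
        rw [CC_insert]; exact indep_extract hmeas hindep hj measurableSet_Iic hCCm
      have hdisj2 : Disjoint (v j ⁻¹' Set.Ioi T ∩ BB v J T k)
          (v j ⁻¹' Set.Iic T ∩ BB v J T (k+1)) := by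
        refine Set.disjoint_left.2 ?_
        rintro ω ⟨h1, -⟩ ⟨h2, -⟩
        simp only [Set.mem_preimage, Set.mem_Ioi, Set.mem_Iic] at h1 h2
        exact absurd h2 (not_le.2 h1)
      have hBBins : μ (BB v (insert j J) T (k+1))
          = μ (v j ⁻¹' Set.Ioi T) * μ (BB v J T k)
            + μ (v j ⁻¹' Set.Iic T) * μ (BB v J T (k+1)) := by
        rw [BB_insert hj, measure_union hdisj2 (((hmeas j) measurableSet_Iic).inter (hle _ hBBk1)),
          indep_extract hmeas hindep hj measurableSet_Ioi hBBk,
          indep_extract hmeas hindep hj measurableSet_Iic hBBk1]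
      rw [hCCins, hBBins]
      set a := μ (v j ⁻¹' Set.Ioc T t)
      set a' := μ (v j ⁻¹' Set.Iic (min T t))
      set σ := μ (v j ⁻¹' Set.Iic t)
      set p := μ (v j ⁻¹' Set.Ioi T)
      set p' := μ (v j ⁻¹' Set.Iic T)
      set c := μ (CC v J t)
      set b := μ (BB v J T k)
      set b' := μ (BB v J T (k+1))
      have haa' : a + a' = σ := by
        have hdisj3 : Disjoint (v j ⁻¹' Set.Ioc T t) (v j ⁻¹' Set.Iic (min T t)) := by
          refine Set.disjoint_left.2 ?_
          intro x h1 h2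
          simp only [Set.mem_preimage, Set.mem_Ioc, Set.mem_Iic, le_min_iff] at h1 h2
          exact absurd h2.1 (not_le.2 h1.1)
        have hset : v j ⁻¹' Set.Ioc T t ∪ v j ⁻¹' Set.Iic (min T t) = v j ⁻¹' Set.Iic t := by
          ext x
          simp only [Set.mem_union, Set.mem_preimage, Set.mem_Ioc, Set.mem_Iic, le_min_iff]
          constructor
          · rintro (⟨-, h2⟩ | ⟨-, h2⟩) <;> exact h2
          · intro hx
            rcases lt_or_ge T (v j x) with h' | h'
            · exact Or.inl ⟨h', hx⟩
            · exact Or.inr ⟨h', hx⟩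
        rw [← measure_union hdisj3 ((hmeas j) measurableSet_Iic), hset]
      have hone : a ≤ σ * p := onedim_harris hmeas j T t
      have hbb : b' ≤ b := measure_mono BB_succ_subset
      have hpp' : p + p' = 1 := by
        show μ (v j ⁻¹' Set.Ioi T) + μ (v j ⁻¹' Set.Iic T) = 1
        rw [compl_Ioi_pre]
        have hcp : μ (v j ⁻¹' Set.Ioi T) + μ (v j ⁻¹' Set.Ioi T)ᶜ = μ Set.univ :=
          measure_add_measure_compl ((hmeas j) measurableSet_Ioi)
        rwa [measure_univ] at hcp
      have hihk := ih k
      have hihk1 := ih (k+1)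
      calc a * μ (CC v J t ∩ BB v J T k) + a' * μ (CC v J t ∩ BB v J T (k+1))
          ≤ a * (c * b) + a' * (c * b') := by gcongr
      _ ≤ (σ * c) * (p * b + p' * b') := by
          obtain ⟨d, hd⟩ := le_iff_exists_add.1 hone
          have hane : a ≠ ⊤ := measure_ne_top μ _
          have ha' : a' = d + σ * p' := by
            have h1 : a + a' = σ * p + σ * p' := by rw [haa', ← mul_add, hpp', mul_one]
            rw [hd, add_assoc] at h1
            exact (ENNReal.add_right_inj hane).1 h1
          calc a * (c * b) + a' * (c * b')
              = a * (c * b) + d * (c * b') + (σ * p') * (c * b') := by rw [ha']; ring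
          _ ≤ a * (c * b) + d * (c * b) + (σ * p') * (c * b') := by gcongr
          _ = (a + d) * (c * b) + (σ * p') * (c * b') := by ring
          _ = (σ * c) * (p * b + p' * b') := by rw [← hd]; ring

lemma tailbound (hmeas : ∀ i, Measurable (v i))
    (hindep : iIndepFun v μ)
    (T : ℝ) (J : Finset (Fin n)) :
    ∀ k : ℕ, (μ (BB v J T k)).toReal
      ≤ (2/3 : ℝ)^k * ∏ l ∈ J, (1 + (μ (v l ⁻¹' Set.Ioi T)).toReal / 2) := by
  induction J using Finset.induction_on with
  | empty =>
    intro k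
    cases k with
    | zero => rw [BB_zero]; simp
    | succ k =>
      rw [BB_empty_succ]
      simp only [measure_empty, ENNReal.toReal_zero, Finset.prod_empty, mul_one]
      positivity
  | @insert j J hj ih =>
    intro k
    have hple : ∀ l, (μ (v l ⁻¹' Set.Ioi T)).toReal ≤ 1 := fun l => by
      simpa using ENNReal.toReal_mono ENNReal.one_ne_top (prob_le_one (μ := μ))
    have hprodge1 : (1:ℝ) ≤ ∏ l ∈ J, (1 + (μ (v l ⁻¹' Set.Ioi T)).toReal / 2) := by
      calc (1:ℝ) = ∏ _l ∈ J, (1:ℝ) := by simp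
      _ ≤ ∏ l ∈ J, (1 + (μ (v l ⁻¹' Set.Ioi T)).toReal / 2) := by
          refine Finset.prod_le_prod (fun _ _ => zero_le_one) ?_
          intro l _
          have h0 : (0:ℝ) ≤ (μ (v l ⁻¹' Set.Ioi T)).toReal := ENNReal.toReal_nonneg
          linarith
    cases k with
    | zero =>
      rw [BB_zero, measure_univ, pow_zero, one_mul, Finset.prod_insert hj]
      simp only [ENNReal.toReal_one]
      have hpj := ENNReal.toReal_nonneg (a := μ (v j ⁻¹' Set.Ioi T))
      nlinarith
    | succ k =>
      have hle := mJ_le (v := v) hmeas J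
      have hBBk : MeasurableSet[mJ v J] (BB v J T k) := measurableSet_BB
      have hBBk1 : MeasurableSet[mJ v J] (BB v J T (k+1)) := measurableSet_BB
      have hdisj2 : Disjoint (v j ⁻¹' Set.Ioi T ∩ BB v J T k)
          (v j ⁻¹' Set.Iic T ∩ BB v J T (k+1)) := by
        refine Set.disjoint_left.2 ?_
        rintro ω ⟨h1, -⟩ ⟨h2, -⟩
        simp only [Set.mem_preimage, Set.mem_Ioi, Set.mem_Iic] at h1 h2
        exact absurd h2 (not_le.2 h1)
      have hBBins : μ (BB v (insert j J) T (k+1))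
          = μ (v j ⁻¹' Set.Ioi T) * μ (BB v J T k)
            + μ (v j ⁻¹' Set.Iic T) * μ (BB v J T (k+1)) := by
        rw [BB_insert hj, measure_union hdisj2 (((hmeas j) measurableSet_Iic).inter (hle _ hBBk1)),
          indep_extract hmeas hindep hj measurableSet_Ioi hBBk,
          indep_extract hmeas hindep hj measurableSet_Iic hBBk1]
      rw [hBBins, ENNReal.toReal_add (ENNReal.mul_ne_top (measure_ne_top μ _) (measure_ne_top μ _))
        (ENNReal.mul_ne_top (measure_ne_top μ _) (measure_ne_top μ _)),
        ENNReal.toReal_mul, ENNReal.toReal_mul, Finset.prod_insert hj]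
      set p := (μ (v j ⁻¹' Set.Ioi T)).toReal with hp
      have hIic : (μ (v j ⁻¹' Set.Iic T)).toReal = 1 - p := by
        have h1 : μ (v j ⁻¹' Set.Ioi T) + μ (v j ⁻¹' Set.Iic T) = 1 := by
          rw [compl_Ioi_pre]
          have hcp : μ (v j ⁻¹' Set.Ioi T) + μ (v j ⁻¹' Set.Ioi T)ᶜ = μ Set.univ :=
            measure_add_measure_compl ((hmeas j) measurableSet_Ioi)
          rwa [measure_univ] at hcp
        have h2 := congrArg ENNReal.toReal h1
        rw [ENNReal.toReal_add (measure_ne_top μ _) (measure_ne_top μ _)] at h2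
        simp only [ENNReal.toReal_one] at h2
        linarith
      rw [hIic]
      have h1 := ih k
      have h2 := ih (k+1)
      have hppos : 0 ≤ p := ENNReal.toReal_nonneg
      have hp1 : p ≤ 1 := hple j
      set Q := ∏ l ∈ J, (1 + (μ (v l ⁻¹' Set.Ioi T)).toReal / 2) with hQ
      calc p * (μ (BB v J T k)).toReal + (1 - p) * (μ (BB v J T (k+1))).toReal
          ≤ p * ((2/3:ℝ)^k * Q) + (1 - p) * ((2/3:ℝ)^(k+1) * Q) := by
            have hb1 : (0:ℝ) ≤ 1 - p := by linarith
            have := ENNReal.toReal_nonneg (a := μ (BB v J T k))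
            gcongr
      _ = (2/3:ℝ)^(k+1) * ((1 + p / 2) * Q) := by rw [pow_succ]; ring


lemma maxVal_empty (f : Fin n → ℝ) : maxVal ∅ f = 0 := by simp [maxVal]

lemma le_maxVal {A : Finset (Fin n)} {f : Fin n → ℝ} {i : Fin n} (h : i ∈ A) :
    f i ≤ maxVal A f := by
  have h1 : (f i : WithBot ℝ) ≤ (A.image f).max := Finset.le_max (Finset.mem_image_of_mem f h)
  obtain ⟨b, hb⟩ := Finset.max_of_mem (Finset.mem_image_of_mem f h)
  rw [maxVal, hb]
  exact_mod_cast hb ▸ h1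

lemma maxVal_exists {A : Finset (Fin n)} (f : Fin n → ℝ) (h : A.Nonempty) :
    ∃ i ∈ A, maxVal A f = f i := by
  obtain ⟨a, ha⟩ := h
  obtain ⟨b, hb⟩ := Finset.max_of_mem (Finset.mem_image_of_mem f ha)
  obtain ⟨i, hi, hfi⟩ := Finset.mem_image.1 (Finset.mem_of_max hb)
  exact ⟨i, hi, by rw [maxVal, hb, hfi]; rfl⟩

lemma maxVal_nonneg {A : Finset (Fin n)} {f : Fin n → ℝ} (h : ∀ i ∈ A, 0 ≤ f i) :
    0 ≤ maxVal A f := by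
  rcases A.eq_empty_or_nonempty with rfl | hA
  · simp [maxVal]
  · obtain ⟨i, hi, heq⟩ := maxVal_exists f hA
    rw [heq]; exact h i hi

lemma maxVal_le {A : Finset (Fin n)} {f : Fin n → ℝ} {c : ℝ} (hc : 0 ≤ c)
    (h : ∀ i ∈ A, f i ≤ c) : maxVal A f ≤ c := by
  rcases A.eq_empty_or_nonempty with rfl | hA
  · simpa [maxVal]
  · obtain ⟨i, hi, heq⟩ := maxVal_exists f hA
    rw [heq]; exact h i hi

lemma maxVal_insert {A : Finset (Fin n)} {f : Fin n → ℝ} {i : Fin n} (h0 : 0 ≤ f i) :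
    maxVal (insert i A) f = max (f i) (maxVal A f) := by
  rcases A.eq_empty_or_nonempty with rfl | hA
  · simp [maxVal, max_eq_left h0]
  · obtain ⟨a, ha⟩ := hA
    obtain ⟨b, hb⟩ := Finset.max_of_mem (Finset.mem_image_of_mem f ha)
    rw [maxVal, maxVal, Finset.image_insert, Finset.max_insert, hb]
    have hcoe : max (↑(f i) : WithBot ℝ) ↑b = ↑(max (f i) b) := (WithBot.coe_max _ _).symm
    rw [hcoe]
    rfl

lemma measurable_maxVal (hmeas : ∀ i, Measurable (v i)) (hnonneg : ∀ i ω, 0 ≤ v i ω)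
    (S : Finset (Fin n)) : Measurable fun ω => maxVal S (fun i => v i ω) := by
  induction S using Finset.induction_on with
  | empty => simpa [maxVal_empty] using measurable_const
  | @insert j S hj ih =>
    have heq : (fun ω => maxVal (insert j S) (fun i => v i ω))
        = fun ω => max (v j ω) (maxVal S (fun i => v i ω)) :=
      funext fun ω => maxVal_insert (hnonneg j ω)
    rw [heq]
    exact (hmeas j).max ih

lemma measurable_card (hmeas : ∀ i, Measurable (v i)) (T : ℝ) (i : Fin n) :
    Measurable fun ω => ((Finset.univ.filter fun j => j < i ∧ T < v j ω)).card := by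
  have heq : (fun ω => ((Finset.univ.filter fun j => j < i ∧ T < v j ω)).card)
      = fun ω => ∑ j : Fin n, if j < i ∧ T < v j ω then 1 else 0 := by
    funext ω
    rw [Finset.card_filter]
  rw [heq]
  refine Finset.measurable_sum _ fun j _ => ?_
  by_cases hj : j < i
  · simp only [hj, true_and]
    exact Measurable.ite ((hmeas j) measurableSet_Ioi) measurable_const measurable_const
  · simp only [hj, false_and, if_false]
    exact measurable_const

def condSet (v : Fin n → Ω → ℝ) (k : ℕ) (T : ℝ) (i : Fin n) : Set Ω :=
  {ω | T < v i ω ∧ (Finset.univ.filter fun j => j < i ∧ T < v j ω).card < k}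

lemma measurableSet_condSet (hmeas : ∀ i, Measurable (v i)) (k : ℕ) (T : ℝ) (i : Fin n) :
    MeasurableSet (condSet v k T i) := by
  have h1 : MeasurableSet {ω | T < v i ω} := (hmeas i) measurableSet_Ioi
  have h2 : MeasurableSet {ω | (Finset.univ.filter fun j => j < i ∧ T < v j ω).card < k} := by
    have : {ω | (Finset.univ.filter fun j => j < i ∧ T < v j ω).card < k}
        = ⋃ m ∈ Set.Iio k, (fun ω => (Finset.univ.filter fun j => j < i ∧ T < v j ω).card) ⁻¹' {m} := by
      ext ω; simp
    rw [this]
    exact MeasurableSet.biUnion (Set.to_countable _) fun m _ =>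
      (measurable_card hmeas T i) (measurableSet_singleton m)
  exact h1.inter h2

lemma mem_acceptSet_iff {k : ℕ} {T : ℝ} {i : Fin n} {ω : Ω} :
    i ∈ acceptSet k T (fun i => v i ω) ↔ ω ∈ condSet v k T i := by
  simp [acceptSet, condSet]

lemma measurableSet_acceptSet_eq (hmeas : ∀ i, Measurable (v i)) (k : ℕ) (T : ℝ)
    (S : Finset (Fin n)) : MeasurableSet {ω | acceptSet k T (fun i => v i ω) = S} := by
  have heq : {ω | acceptSet k T (fun i => v i ω) = S}
      = ⋂ i, {ω | ω ∈ condSet v k T i ↔ i ∈ S} := by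
    ext ω
    simp only [Set.mem_setOf_eq, Set.mem_iInter, Finset.ext_iff]
    constructor
    · intro h i; rw [← mem_acceptSet_iff]; exact h i
    · intro h i; rw [mem_acceptSet_iff]; exact h i
  rw [heq]
  refine MeasurableSet.iInter fun i => ?_
  by_cases hi : i ∈ S
  · simp only [hi, iff_true]
    exact measurableSet_condSet hmeas k T i
  · simp only [hi, iff_false]
    exact (measurableSet_condSet hmeas k T i).compl

lemma measurable_alg (hmeas : ∀ i, Measurable (v i)) (hnonneg : ∀ i ω, 0 ≤ v i ω)
    (k : ℕ) (T : ℝ) :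
    Measurable fun ω => maxVal (acceptSet k T (fun i => v i ω)) (fun i => v i ω) := by
  have heq : (fun ω => maxVal (acceptSet k T (fun i => v i ω)) (fun i => v i ω))
      = fun ω => ∑ S ∈ (Finset.univ : Finset (Finset (Fin n))),
          if acceptSet k T (fun i => v i ω) = S then maxVal S (fun i => v i ω) else 0 := by
    funext ω
    rw [Finset.sum_ite_eq, if_pos (Finset.mem_univ _)]
  rw [heq]
  refine Finset.measurable_sum _ fun S _ => ?_
  exact Measurable.ite (measurableSet_acceptSet_eq hmeas k T S)
    (measurable_maxVal hmeas hnonneg S) measurable_const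


lemma first_exceeder {t : ℝ} {ω : Ω} (h : ∃ i, t < v i ω) :
    ∃ j, t < v j ω ∧ ∀ l, l < j → v l ω ≤ t := by
  obtain ⟨i, hi⟩ := h
  have hF : (Finset.univ.filter fun i => t < v i ω).Nonempty :=
    ⟨i, Finset.mem_filter.2 ⟨Finset.mem_univ _, hi⟩⟩
  refine ⟨(Finset.univ.filter fun i => t < v i ω).min' hF,
    (Finset.mem_filter.1 (Finset.min'_mem _ hF)).2, ?_⟩
  intro l hl
  by_contra hcon
  have hmem : l ∈ Finset.univ.filter fun i => t < v i ω :=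
    Finset.mem_filter.2 ⟨Finset.mem_univ _, not_le.1 hcon⟩
  exact absurd (Finset.min'_le _ l hmem) (not_le.2 hl)

lemma core_ineq (hmeas : ∀ i, Measurable (v i))
    (hindep : iIndepFun v μ)
    (hn : 0 < n) {k : ℕ} (hk : 1 ≤ k) {T : ℝ} (hT0 : 0 < T) {δ : ℝ}
    (hδ : ∀ J : Finset (Fin n), (μ (BB v J T k)).toReal ≤ δ) {t : ℝ} (ht : T < t) :
    μ {ω | t < maxVal Finset.univ (fun i => v i ω)}
      ≤ μ {ω | t < maxVal (acceptSet k T (fun i => v i ω)) (fun i => v i ω)}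
        + ENNReal.ofReal δ * μ {ω | t < maxVal Finset.univ (fun i => v i ω)} := by
  classical
  set FE : Fin n → Set Ω := fun j => v j ⁻¹' Set.Ioi t ∩ CC v (Finset.univ.filter (· < j)) t
    with hFE
  have hle : ∀ J : Finset (Fin n), mJ v J ≤ (inferInstance : MeasurableSpace Ω) :=
    mJ_le hmeas
  have hFEmeas : ∀ j, MeasurableSet (FE j) := fun j =>
    ((hmeas j) measurableSet_Ioi).inter (hle _ _ measurableSet_CC)
  have hM_eq : {ω | t < maxVal Finset.univ (fun i => v i ω)} = ⋃ j ∈ Finset.univ, FE j := by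
    ext ω
    simp only [Set.mem_setOf_eq, Set.mem_iUnion, Finset.mem_univ, Set.mem_iUnion, exists_prop,
      true_and]
    constructor
    · intro hM
      have hex : ∃ i, t < v i ω := by
        obtain ⟨i, -, heq⟩ := maxVal_exists (fun i => v i ω) ⟨⟨0, hn⟩, Finset.mem_univ _⟩
        exact ⟨i, heq ▸ hM⟩
      obtain ⟨j, hj1, hj2⟩ := first_exceeder hex
      refine ⟨j, hj1, ?_⟩
      intro l hl
      exact hj2 l (Finset.mem_filter.1 hl).2
    · rintro ⟨j, hj, -⟩
      exact lt_of_lt_of_le hj (le_maxVal (f := fun i => v i ω) (Finset.mem_univ j))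
  have hdisj : (↑(Finset.univ : Finset (Fin n)) : Set (Fin n)).PairwiseDisjoint FE := by
    intro a _ b _ hab
    refine Set.disjoint_left.2 ?_
    rintro ω ⟨ha1, ha2⟩ ⟨hb1, hb2⟩
    rcases lt_trichotomy a b with h | h | h
    · have := hb2 a (Finset.mem_filter.2 ⟨Finset.mem_univ _, h⟩)
      exact absurd this (not_le.2 ha1)
    · exact hab h
    · have := ha2 b (Finset.mem_filter.2 ⟨Finset.mem_univ _, h⟩)
      exact absurd this (not_le.2 hb1)
  have hMmeasure : μ {ω | t < maxVal Finset.univ (fun i => v i ω)} = ∑ j, μ (FE j) := by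
    rw [hM_eq, measure_biUnion_finset hdisj fun j _ => hFEmeas j]
  have hsub : ∀ j : Fin n, FE j ⊆
      {ω | t < maxVal (acceptSet k T (fun i => v i ω)) (fun i => v i ω)}
        ∪ (FE j ∩ BB v (Finset.univ.filter (· < j)) T k) := by
    intro j ω hω
    by_cases hc : (Finset.univ.filter fun l => l < j ∧ T < v l ω).card < k
    · left
      have hjmem : j ∈ acceptSet k T (fun i => v i ω) :=
        Finset.mem_filter.2 ⟨Finset.mem_univ _, lt_trans ht hω.1, hc⟩
      exact lt_of_lt_of_le hω.1 (le_maxVal hjmem)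
    · right
      refine ⟨hω, ?_⟩
      show k ≤ ((Finset.univ.filter (· < j)).filter fun l => T < v l ω).card
      rw [Finset.filter_filter]
      exact not_lt.1 hc
  have hperj : ∀ j : Fin n, μ (FE j ∩ BB v (Finset.univ.filter (· < j)) T k)
      ≤ ENNReal.ofReal δ * μ (FE j) := by
    intro j
    have hjnot : j ∉ Finset.univ.filter (· < j) := by
      simp [Finset.mem_filter]
    have hCCm : MeasurableSet[mJ v (Finset.univ.filter (· < j))]
        (CC v (Finset.univ.filter (· < j)) t) := measurableSet_CC
    have hBBm : MeasurableSet[mJ v (Finset.univ.filter (· < j))]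
        (BB v (Finset.univ.filter (· < j)) T k) := measurableSet_BB
    have hBBle : μ (BB v (Finset.univ.filter (· < j)) T k) ≤ ENNReal.ofReal δ := by
      rw [← ENNReal.ofReal_toReal (measure_ne_top μ _)]
      exact ENNReal.ofReal_le_ofReal (hδ _)
    calc μ (FE j ∩ BB v (Finset.univ.filter (· < j)) T k)
        = μ (v j ⁻¹' Set.Ioi t ∩ (CC v (Finset.univ.filter (· < j)) t
            ∩ BB v (Finset.univ.filter (· < j)) T k)) := by rw [hFE, Set.inter_assoc]
    _ = μ (v j ⁻¹' Set.Ioi t) * μ (CC v (Finset.univ.filter (· < j)) t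
            ∩ BB v (Finset.univ.filter (· < j)) T k) :=
        indep_extract hmeas hindep hjnot measurableSet_Ioi (hCCm.inter hBBm)
    _ ≤ μ (v j ⁻¹' Set.Ioi t) * (μ (CC v (Finset.univ.filter (· < j)) t)
            * μ (BB v (Finset.univ.filter (· < j)) T k)) := by
        gcongr
        exact harris hmeas hindep T t _ k
    _ = (μ (v j ⁻¹' Set.Ioi t) * μ (CC v (Finset.univ.filter (· < j)) t))
            * μ (BB v (Finset.univ.filter (· < j)) T k) := by ring
    _ = μ (FE j) * μ (BB v (Finset.univ.filter (· < j)) T k) := by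
        rw [hFE, indep_extract hmeas hindep hjnot measurableSet_Ioi hCCm]
    _ ≤ μ (FE j) * ENNReal.ofReal δ := by gcongr
    _ = ENNReal.ofReal δ * μ (FE j) := mul_comm _ _
  calc μ {ω | t < maxVal Finset.univ (fun i => v i ω)}
      ≤ μ ({ω | t < maxVal (acceptSet k T (fun i => v i ω)) (fun i => v i ω)}
          ∪ ⋃ j ∈ Finset.univ, (FE j ∩ BB v (Finset.univ.filter (· < j)) T k)) := by
        refine measure_mono ?_
        rw [hM_eq]
        refine Set.iUnion₂_subset fun j hj => ?_
        refine (hsub j).trans ?_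
        refine Set.union_subset_union subset_rfl ?_
        exact fun ω hω => Set.mem_iUnion₂.2 ⟨j, hj, hω⟩
  _ ≤ μ {ω | t < maxVal (acceptSet k T (fun i => v i ω)) (fun i => v i ω)}
        + μ (⋃ j ∈ Finset.univ, (FE j ∩ BB v (Finset.univ.filter (· < j)) T k)) :=
      measure_union_le _ _
  _ ≤ μ {ω | t < maxVal (acceptSet k T (fun i => v i ω)) (fun i => v i ω)}
        + ∑ j, μ (FE j ∩ BB v (Finset.univ.filter (· < j)) T k) := by
      gcongr
      exact measure_biUnion_finset_le _ _
  _ ≤ μ {ω | t < maxVal (acceptSet k T (fun i => v i ω)) (fun i => v i ω)}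
        + ∑ j, ENNReal.ofReal δ * μ (FE j) := by
      gcongr with j
      exact hperj j
  _ = μ {ω | t < maxVal (acceptSet k T (fun i => v i ω)) (fun i => v i ω)}
        + ENNReal.ofReal δ * μ {ω | t < maxVal Finset.univ (fun i => v i ω)} := by
      rw [hMmeasure, Finset.mul_sum]

lemma exp_inv_le (m : ℕ) (hm : m ≠ 0) (h : Real.exp 1 ≤ (3/2:ℝ)^m) :
    Real.exp (1/(m:ℝ)) ≤ 3/2 := by
  have h2 : Real.exp (1/(m:ℝ)) ^ m = Real.exp 1 := by
    rw [← Real.exp_nat_mul]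
    congr 1
    field_simp
  refine le_of_pow_le_pow_left₀ hm (by norm_num) ?_
  rw [h2]; exact h

lemma exp_third : (2/3 : ℝ) ≤ Real.exp (-(1/3) : ℝ) := by
  have h3 : Real.exp (1/(3:ℕ):ℝ) ≤ 3/2 := by
    refine exp_inv_le 3 (by norm_num) ?_
    have h1 := Real.exp_one_lt_d9
    nlinarith
  have h3' : Real.exp ((1:ℝ)/3) ≤ 3/2 := by norm_num at h3 ⊢; exact h3
  have hmul : Real.exp (-(1/3) : ℝ) * Real.exp ((1:ℝ)/3) = 1 := by
    rw [← Real.exp_add]; norm_num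
  have hpos := Real.exp_pos (-(1/3) : ℝ)
  nlinarith

lemma exp_sixth : (2/3 : ℝ) ≤ Real.exp (-(1/6) : ℝ) := by
  have h3 : Real.exp (1/(6:ℕ):ℝ) ≤ 3/2 := by
    refine exp_inv_le 6 (by norm_num) ?_
    have h1 := Real.exp_one_lt_d9
    nlinarith
  have h3' : Real.exp ((1:ℝ)/6) ≤ 3/2 := by norm_num at h3 ⊢; exact h3
  have hmul : Real.exp (-(1/6) : ℝ) * Real.exp ((1:ℝ)/6) = 1 := by
    rw [← Real.exp_add]; norm_num
  have hpos := Real.exp_pos (-(1/6) : ℝ)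
  nlinarith

lemma delta_bound (hmeas : ∀ i, Measurable (v i))
    (hindep : iIndepFun v μ)
    (hatomless : ∀ i (x : ℝ), μ {ω | v i ω = x} = 0)
    {k : ℕ} (hk : 1 ≤ k) {T : ℝ}
    (hT : μ {ω | ∀ i, v i ω < T} = ENNReal.ofReal ((2/3:ℝ)^(k-1)))
    (J : Finset (Fin n)) :
    (μ (BB v J T k)).toReal ≤ (3/2) * Real.exp (-(k:ℝ)/6) := by
  classical
  set p : Fin n → ℝ := fun l => (μ (v l ⁻¹' Set.Ioi T)).toReal with hpdef
  have hp0 : ∀ l, 0 ≤ p l := fun l => ENNReal.toReal_nonneg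
  have hp1 : ∀ l, p l ≤ 1 := fun l => by
    simpa using ENNReal.toReal_mono ENNReal.one_ne_top (prob_le_one (μ := μ))
  have hIioIic : ∀ i : Fin n, μ (v i ⁻¹' Set.Iio T) = μ (v i ⁻¹' Set.Iic T) := by
    intro i
    refine le_antisymm (measure_mono (Set.preimage_mono Set.Iio_subset_Iic_self)) ?_
    calc μ (v i ⁻¹' Set.Iic T) ≤ μ (v i ⁻¹' Set.Iio T ∪ {ω | v i ω = T}) := by
          refine measure_mono ?_
          intro ω hω
          have hω' : v i ω ≤ T := hω
          rcases lt_or_eq_of_le hω' with h | h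
          · exact Or.inl h
          · exact Or.inr h
    _ ≤ μ (v i ⁻¹' Set.Iio T) + μ {ω | v i ω = T} := measure_union_le _ _
    _ = μ (v i ⁻¹' Set.Iio T) := by rw [hatomless i T, add_zero]
  have hprod : ∏ l : Fin n, μ (v l ⁻¹' Set.Iic T) = ENNReal.ofReal ((2/3:ℝ)^(k-1)) := by
    have h1 : {ω | ∀ i, v i ω < T} = ⋂ i ∈ Finset.univ, v i ⁻¹' Set.Iio T := by
      ext ω; simp [Set.mem_iInter]
    have h2 := hindep.measure_inter_preimage_eq_mul Finset.univ
      (sets := fun _ => Set.Iio T) (fun i _ => measurableSet_Iio)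
    rw [h1, h2] at hT
    rw [← hT]
    exact Finset.prod_congr rfl fun l _ => (hIioIic l).symm
  have hr : ∀ l : Fin n, (μ (v l ⁻¹' Set.Iic T)).toReal = 1 - p l := by
    intro l
    have h1 : μ (v l ⁻¹' Set.Ioi T) + μ (v l ⁻¹' Set.Iic T) = 1 := by
      rw [compl_Ioi_pre]
      have hcp : μ (v l ⁻¹' Set.Ioi T) + μ (v l ⁻¹' Set.Ioi T)ᶜ = μ Set.univ :=
        measure_add_measure_compl ((hmeas l) measurableSet_Ioi)
      rwa [measure_univ] at hcp
    have h2 := congrArg ENNReal.toReal h1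
    rw [ENNReal.toReal_add (measure_ne_top μ _) (measure_ne_top μ _)] at h2
    simp only [ENNReal.toReal_one] at h2
    linarith
  have hq_prod : ∏ l : Fin n, (1 - p l) = (2/3:ℝ)^(k-1) := by
    have h3 := congrArg ENNReal.toReal hprod
    rw [ENNReal.toReal_prod, ENNReal.toReal_ofReal (by positivity)] at h3
    rw [← h3]
    exact Finset.prod_congr rfl fun l _ => (hr l).symm
  set P : ℝ := ∏ l : Fin n, (1 + p l / 2) with hPdef
  have hfac_nonneg : ∀ l : Fin n, (0:ℝ) ≤ 1 + p l / 2 := fun l => by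
    have := hp0 l; linarith
  have hJP : ∏ l ∈ J, (1 + p l / 2) ≤ P := by
    rw [hPdef, ← Finset.prod_sdiff (Finset.subset_univ J)]
    refine le_mul_of_one_le_left (Finset.prod_nonneg fun l _ => hfac_nonneg l) ?_
    calc (1:ℝ) = ∏ _l ∈ Finset.univ \ J, (1:ℝ) := by simp
    _ ≤ ∏ l ∈ Finset.univ \ J, (1 + p l / 2) := by
        refine Finset.prod_le_prod (fun _ _ => zero_le_one) ?_
        intro l _
        have := hp0 l; linarith
  have hP1 : P * P * ((2/3:ℝ)^(k-1)) ≤ 1 := by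
    rw [← hq_prod, hPdef, ← Finset.prod_mul_distrib, ← Finset.prod_mul_distrib]
    refine Finset.prod_le_one (fun l _ => ?_) (fun l _ => ?_)
    · have h1 := hp0 l; have h2 := hp1 l
      have : (0:ℝ) ≤ 1 - p l := by linarith
      have := hfac_nonneg l
      positivity
    · have h1 := hp0 l; have h2 := hp1 l
      nlinarith [sq_nonneg (p l), mul_nonneg (mul_nonneg h1 h1) h1]
  have hb := tailbound hmeas hindep T J k
  set b := (μ (BB v J T k)).toReal with hbdef
  have hbnn : 0 ≤ b := ENNReal.toReal_nonneg
  have hPnn : 0 ≤ P := Finset.prod_nonneg fun l _ => hfac_nonneg l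
  have hb' : b ≤ (2/3:ℝ)^k * P := by
    refine hb.trans ?_
    have h23 : (0:ℝ) ≤ (2/3:ℝ)^k := by positivity
    exact mul_le_mul_of_nonneg_left hJP h23
  have hpow : (2/3:ℝ)^k * (2/3:ℝ)^k = (2/3:ℝ)^(k+1) * (2/3:ℝ)^(k-1) := by
    rw [← pow_add, ← pow_add]
    congr 1
    omega
  have hb2 : b^2 * ((2/3:ℝ)^(k-1)) ≤ (2/3:ℝ)^(k+1) * ((2/3:ℝ)^(k-1)) := by
    have hq_nn : (0:ℝ) ≤ (2/3:ℝ)^(k-1) := by positivity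
    have hsq : b^2 ≤ ((2/3:ℝ)^k * P)^2 := by nlinarith
    calc b^2 * (2/3:ℝ)^(k-1) ≤ ((2/3:ℝ)^k * P)^2 * (2/3:ℝ)^(k-1) :=
          mul_le_mul_of_nonneg_right hsq hq_nn
    _ = ((2/3:ℝ)^k * (2/3:ℝ)^k) * (P * P * (2/3:ℝ)^(k-1)) := by ring
    _ ≤ ((2/3:ℝ)^k * (2/3:ℝ)^k) * 1 := by
        have hnn2 : (0:ℝ) ≤ (2/3:ℝ)^k * (2/3:ℝ)^k := by positivity
        exact mul_le_mul_of_nonneg_left hP1 hnn2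
    _ = (2/3:ℝ)^(k+1) * (2/3:ℝ)^(k-1) := by rw [mul_one, hpow]
  have hb2' : b^2 ≤ (2/3:ℝ)^(k+1) :=
    le_of_mul_le_mul_right hb2 (by positivity)
  have hek : (2/3:ℝ)^k ≤ Real.exp (-(k:ℝ)/3) := by
    have h1 : ((2:ℝ)/3)^k ≤ (Real.exp (-(1/3):ℝ))^k :=
      pow_le_pow_left₀ (by norm_num) exp_third k
    rwa [← Real.exp_nat_mul, show ((k:ℝ) * (-(1/3)) = -(k:ℝ)/3) by ring] at h1
  have hδ2 : (2/3:ℝ)^(k+1) ≤ ((3/2) * Real.exp (-(k:ℝ)/6))^2 := by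
    have hexpand : ((3/2:ℝ) * Real.exp (-(k:ℝ)/6))^2 = (9/4) * Real.exp (-(k:ℝ)/3) := by
      calc ((3/2:ℝ) * Real.exp (-(k:ℝ)/6))^2
          = (9/4) * (Real.exp (-(k:ℝ)/6) * Real.exp (-(k:ℝ)/6)) := by ring
      _ = (9/4) * Real.exp (-(k:ℝ)/3) := by rw [← Real.exp_add]; congr 1; ring
    rw [hexpand, pow_succ]
    calc (2/3:ℝ)^k * (2/3) ≤ Real.exp (-(k:ℝ)/3) * (2/3) :=
          mul_le_mul_of_nonneg_right hek (by norm_num)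
    _ ≤ (9/4) * Real.exp (-(k:ℝ)/3) := by nlinarith [Real.exp_pos (-(k:ℝ)/3)]
  have hδnn : (0:ℝ) ≤ (3/2) * Real.exp (-(k:ℝ)/6) := by positivity
  calc b = Real.sqrt (b^2) := (Real.sqrt_sq hbnn).symm
  _ ≤ Real.sqrt (((3/2) * Real.exp (-(k:ℝ)/6))^2) := Real.sqrt_le_sqrt (hb2'.trans hδ2)
  _ = (3/2) * Real.exp (-(k:ℝ)/6) := Real.sqrt_sq hδnn

lemma q_le_delta {k : ℕ} (hk : 1 ≤ k) :
    ((2:ℝ)/3)^(k-1) ≤ (3/2) * Real.exp (-(k:ℝ)/6) := by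
  have hek : (2/3:ℝ)^k ≤ Real.exp (-(k:ℝ)/6) := by
    have h1 : ((2:ℝ)/3)^k ≤ (Real.exp (-(1/6):ℝ))^k :=
      pow_le_pow_left₀ (by norm_num) exp_sixth k
    rwa [← Real.exp_nat_mul, show ((k:ℝ) * (-(1/6)) = -(k:ℝ)/6) by ring] at h1
  have hsplit : ((2:ℝ)/3)^(k-1) * (2/3) = (2/3:ℝ)^k := by
    rw [← pow_succ]
    congr 1
    omega
  nlinarith [pow_nonneg (by norm_num : (0:ℝ) ≤ 2/3) (k-1)]


lemma acceptSet_eq_empty {k : ℕ} {T : ℝ} {ω : Ω} (h : ¬ ∃ i, T < v i ω) :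
    acceptSet k T (fun i => v i ω) = ∅ := by
  rw [acceptSet, Finset.filter_eq_empty_iff]
  intro i _
  rintro ⟨h1, -⟩
  exact h ⟨i, h1⟩

lemma alg_gt_T {k : ℕ} (hk : 1 ≤ k) {T : ℝ} {ω : Ω} (h : ∃ i, T < v i ω) :
    T < maxVal (acceptSet k T (fun i => v i ω)) (fun i => v i ω) := by
  obtain ⟨j, hj1, hj2⟩ := first_exceeder h
  have hmem : j ∈ acceptSet k T (fun i => v i ω) := by
    refine Finset.mem_filter.2 ⟨Finset.mem_univ _, hj1, ?_⟩
    have hempty : (Finset.univ.filter fun l => l < j ∧ T < v l ω) = ∅ := by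
      rw [Finset.filter_eq_empty_iff]
      rintro l - ⟨hl1, hl2⟩
      exact absurd (hj2 l hl1) (not_le.2 hl2)
    rw [hempty]
    simpa using (show 0 < k from hk)
  exact lt_of_lt_of_le hj1 (le_maxVal (f := fun i => v i ω) hmem)

lemma layer {f : Ω → ℝ} (hf : Measurable f) {T : ℝ}
    (hint : Integrable (fun ω => max 0 (f ω - T)) μ) :
    ∫ ω, max 0 (f ω - T) ∂μ = (∫⁻ s in Set.Ioi (0:ℝ), μ {ω | T + s < f ω}).toReal
    ∧ (∫⁻ s in Set.Ioi (0:ℝ), μ {ω | T + s < f ω}) ≠ ⊤ := by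
  have hnn : 0 ≤ᵐ[μ] fun ω => max 0 (f ω - T) := ae_of_all _ fun ω => le_max_left _ _
  have hmeas' : Measurable fun ω => max 0 (f ω - T) :=
    measurable_const.max (hf.sub measurable_const)
  have h1 : ∫⁻ ω, ENNReal.ofReal (max 0 (f ω - T)) ∂μ
      = ∫⁻ s in Set.Ioi (0:ℝ), μ {ω | s < max 0 (f ω - T)} :=
    lintegral_eq_lintegral_meas_lt μ hnn hmeas'.aemeasurable
  have h2 : ∫⁻ s in Set.Ioi (0:ℝ), μ {ω | s < max 0 (f ω - T)}
      = ∫⁻ s in Set.Ioi (0:ℝ), μ {ω | T + s < f ω} := by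
    refine setLIntegral_congr_fun measurableSet_Ioi (fun s hs => ?_)
    congr 1
    ext ω
    have hs0 : (0:ℝ) < s := hs
    simp only [Set.mem_setOf_eq, lt_max_iff]
    constructor
    · rintro (h | h)
      · exact absurd h (not_lt.2 hs0.le)
      · linarith
    · intro h
      right
      linarith
  have hfin : ∫⁻ ω, ENNReal.ofReal (max 0 (f ω - T)) ∂μ ≠ ⊤ := hint.lintegral_lt_top.ne
  constructor
  · rw [integral_eq_lintegral_of_nonneg_ae hnn hmeas'.aestronglyMeasurable, h1, h2]
  · rw [← h2, ← h1]
    exact hfin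

end AlgMaxAux

open AlgMaxAux in
theorem alg_max_prophet {Ω : Type*} [MeasurableSpace Ω] (μ : Measure Ω)
    [IsProbabilityMeasure μ]
    (n k : ℕ) (hn : 0 < n) (hk : 1 ≤ k)
    (v : Fin n → Ω → ℝ)
    (hmeas : ∀ i, Measurable (v i)) (hnonneg : ∀ i ω, 0 ≤ v i ω)
    (hindep : iIndepFun v μ)
    (hatomless : ∀ i (x : ℝ), μ {ω | v i ω = x} = 0)
    (T : ℝ)
    (hT : μ {ω | ∀ i, v i ω < T} = ENNReal.ofReal ((2 / 3 : ℝ) ^ (k - 1))) :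
    (1 - (3 / 2) * Real.exp (-(k : ℝ) / 6)) * ∫ ω, maxVal Finset.univ (fun i => v i ω) ∂μ ≤
      ∫ ω, maxVal (acceptSet k T (fun i => v i ω)) (fun i => v i ω) ∂μ := by
  classical
  set δ : ℝ := 3 / 2 * Real.exp (-(k:ℝ) / 6) with hδdef
  have hδpos : 0 < δ := by positivity
  set Mf : Ω → ℝ := fun ω => maxVal Finset.univ (fun i => v i ω) with hMfdef
  set Af : Ω → ℝ := fun ω => maxVal (acceptSet k T (fun i => v i ω)) (fun i => v i ω) with hAfdef
  have hMf_nonneg : ∀ ω, 0 ≤ Mf ω := fun ω => maxVal_nonneg fun i _ => hnonneg i ω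
  have hAf_nonneg : ∀ ω, 0 ≤ Af ω := fun ω => maxVal_nonneg fun i _ => hnonneg i ω
  have hIM : 0 ≤ ∫ ω, Mf ω ∂μ := integral_nonneg hMf_nonneg
  have hIA : 0 ≤ ∫ ω, Af ω ∂μ := integral_nonneg hAf_nonneg
  rcases le_or_gt 1 δ with hδ1 | hδ1
  · have h1 : 1 - δ ≤ 0 := by linarith
    calc (1 - δ) * ∫ ω, Mf ω ∂μ ≤ 0 := mul_nonpos_iff.2 (Or.inr ⟨h1, hIM⟩)
    _ ≤ ∫ ω, Af ω ∂μ := hIA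
  have hMf_meas : Measurable Mf := measurable_maxVal hmeas hnonneg Finset.univ
  have hAf_meas : Measurable Af := measurable_alg hmeas hnonneg k T
  by_cases hMint : Integrable Mf μ
  swap
  · rw [integral_undef hMint, mul_zero]
    exact hIA
  have hTpos : 0 < T := by
    by_contra hT0
    push_neg at hT0
    have hempty : {ω | ∀ i, v i ω < T} = ∅ := by
      ext ω
      simp only [Set.mem_setOf_eq, Set.mem_empty_iff_false, iff_false, not_forall, not_lt]
      exact ⟨⟨0, hn⟩, le_trans hT0 (hnonneg _ ω)⟩
    rw [hempty, measure_empty] at hT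
    have hqpos : (0:ℝ) < (2/3:ℝ)^(k-1) := by positivity
    rw [eq_comm, ENNReal.ofReal_eq_zero] at hT
    linarith
  have hAleM : ∀ ω, Af ω ≤ Mf ω := fun ω =>
    maxVal_le (hMf_nonneg ω) fun i _ => le_maxVal (f := fun i => v i ω) (Finset.mem_univ i)
  have hAint : Integrable Af μ := by
    refine hMint.mono' hAf_meas.aestronglyMeasurable (ae_of_all _ fun ω => ?_)
    rw [Real.norm_eq_abs, abs_of_nonneg (hAf_nonneg ω)]
    exact hAleM ω
  set E : Set Ω := {ω | ∃ i, T < v i ω} with hEdef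
  have hEmeas : MeasurableSet E := by
    have hEu : E = ⋃ i, v i ⁻¹' Set.Ioi T := by ext ω; simp [hEdef]
    rw [hEu]
    exact MeasurableSet.iUnion fun i => (hmeas i) measurableSet_Ioi
  have hq1 : ((2:ℝ)/3)^(k-1) ≤ 1 := by apply pow_le_one₀ <;> norm_num
  have hEcompl : μ Eᶜ = ENNReal.ofReal ((2/3:ℝ)^(k-1)) := by
    have hIioIic : ∀ i : Fin n, μ (v i ⁻¹' Set.Iio T) = μ (v i ⁻¹' Set.Iic T) := by
      intro i
      refine le_antisymm (measure_mono (Set.preimage_mono Set.Iio_subset_Iic_self)) ?_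
      calc μ (v i ⁻¹' Set.Iic T) ≤ μ (v i ⁻¹' Set.Iio T ∪ {ω | v i ω = T}) := by
            refine measure_mono ?_
            intro ω hω
            have hω' : v i ω ≤ T := hω
            rcases lt_or_eq_of_le hω' with h | h
            · exact Or.inl h
            · exact Or.inr h
      _ ≤ μ (v i ⁻¹' Set.Iio T) + μ {ω | v i ω = T} := measure_union_le _ _
      _ = μ (v i ⁻¹' Set.Iio T) := by rw [hatomless i T, add_zero]
    have h1 : {ω | ∀ i, v i ω < T} = ⋂ i ∈ Finset.univ, v i ⁻¹' Set.Iio T := by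
      ext ω; simp [Set.mem_iInter]
    have h2 := hindep.measure_inter_preimage_eq_mul Finset.univ
      (sets := fun _ => Set.Iio T) (fun i _ => measurableSet_Iio)
    have h3 : Eᶜ = ⋂ i ∈ Finset.univ, v i ⁻¹' Set.Iic T := by
      ext ω
      simp [hEdef, Set.mem_iInter, not_lt]
    have h4 := hindep.measure_inter_preimage_eq_mul Finset.univ
      (sets := fun _ => Set.Iic T) (fun i _ => measurableSet_Iic)
    rw [h3, h4]
    rw [h1, h2] at hT
    rw [← hT]
    exact Finset.prod_congr rfl fun l _ => (hIioIic l).symm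
  have hEq : (μ E).toReal = 1 - (2/3:ℝ)^(k-1) := by
    have h5 : μ E + μ Eᶜ = 1 := by
      have := measure_add_measure_compl (μ := μ) hEmeas
      rwa [measure_univ] at this
    have h6 := congrArg ENNReal.toReal h5
    rw [ENNReal.toReal_add (measure_ne_top μ _) (measure_ne_top μ _), hEcompl,
      ENNReal.toReal_ofReal (by positivity)] at h6
    simp only [ENNReal.toReal_one] at h6
    linarith
  have hMT_int : Integrable (fun ω => max 0 (Mf ω - T)) μ := by
    refine hMint.mono' (measurable_const.max (hMf_meas.sub measurable_const)).aestronglyMeasurable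
      (ae_of_all _ fun ω => ?_)
    rw [Real.norm_eq_abs, abs_of_nonneg (le_max_left 0 _)]
    exact max_le (hMf_nonneg ω) (by linarith [hTpos])
  have hAT_int : Integrable (fun ω => max 0 (Af ω - T)) μ := by
    refine hMint.mono' (measurable_const.max (hAf_meas.sub measurable_const)).aestronglyMeasurable
      (ae_of_all _ fun ω => ?_)
    rw [Real.norm_eq_abs, abs_of_nonneg (le_max_left 0 _)]
    exact max_le (hMf_nonneg ω) (by linarith [hTpos, hAleM ω])
  obtain ⟨hlayM, hFfin⟩ := layer (μ := μ) hMf_meas (T := T) hMT_int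
  obtain ⟨hlayA, hGfin⟩ := layer (μ := μ) hAf_meas (T := T) hAT_int
  set F := ∫⁻ s in Set.Ioi (0:ℝ), μ {ω | T + s < Mf ω} with hFdef
  set G := ∫⁻ s in Set.Ioi (0:ℝ), μ {ω | T + s < Af ω} with hGdef
  have hGmeas : Measurable fun s : ℝ => μ {ω | T + s < Af ω} := by
    have hant : Antitone fun s : ℝ => μ {ω | T + s < Af ω} := by
      intro s1 s2 h
      refine measure_mono fun ω hω => ?_
      have : T + s2 < Af ω := hω
      show T + s1 < Af ω
      linarith
    exact hant.measurable
  have hFmeas : Measurable fun s : ℝ => μ {ω | T + s < Mf ω} := by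
    have hant : Antitone fun s : ℝ => μ {ω | T + s < Mf ω} := by
      intro s1 s2 h
      refine measure_mono fun ω hω => ?_
      have : T + s2 < Mf ω := hω
      show T + s1 < Mf ω
      linarith
    exact hant.measurable
  have hFG : F ≤ G + ENNReal.ofReal δ * F := by
    calc F ≤ ∫⁻ s in Set.Ioi (0:ℝ),
        (μ {ω | T + s < Af ω} + ENNReal.ofReal δ * μ {ω | T + s < Mf ω}) := by
          refine lintegral_mono_ae ((ae_restrict_iff' measurableSet_Ioi).2
            (ae_of_all _ fun s hs => ?_))
          have hs0 : (0:ℝ) < s := hs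
          exact core_ineq hmeas hindep hn hk hTpos
            (fun J => delta_bound hmeas hindep hatomless hk hT J) (by linarith)
    _ = G + ENNReal.ofReal δ * F := by
        rw [lintegral_add_left hGmeas, lintegral_const_mul _ hFmeas]
  have hGF : G ≤ F :=
    lintegral_mono fun s => measure_mono fun ω h => lt_of_lt_of_le h (hAleM ω)
  have h𝓕nn : (0:ℝ) ≤ F.toReal := ENNReal.toReal_nonneg
  have h3 : F.toReal ≤ G.toReal + δ * F.toReal := by
    have hRfin : G + ENNReal.ofReal δ * F ≠ ⊤ :=
      ENNReal.add_ne_top.2 ⟨hGfin, ENNReal.mul_ne_top ENNReal.ofReal_ne_top hFfin⟩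
    have h7 := ENNReal.toReal_mono hRfin hFG
    rwa [ENNReal.toReal_add hGfin (ENNReal.mul_ne_top ENNReal.ofReal_ne_top hFfin),
      ENNReal.toReal_mul, ENNReal.toReal_ofReal hδpos.le] at h7
  have hMle : ∫ ω, Mf ω ∂μ ≤ T + F.toReal := by
    have hpt : ∀ ω, Mf ω ≤ T + max 0 (Mf ω - T) := fun ω => by
      have := le_max_right 0 (Mf ω - T); linarith
    calc ∫ ω, Mf ω ∂μ ≤ ∫ ω, (T + max 0 (Mf ω - T)) ∂μ :=
        integral_mono hMint ((integrable_const T).add hMT_int) hpt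
    _ = T + ∫ ω, max 0 (Mf ω - T) ∂μ := by
        rw [integral_add (integrable_const T) hMT_int, integral_const, measureReal_def, measure_univ,
          ENNReal.toReal_one, smul_eq_mul, one_mul]
    _ = T + F.toReal := by rw [hlayM]
  have hAeq : ∫ ω, Af ω ∂μ = T * (μ E).toReal + G.toReal := by
    have hpt : ∀ ω, Af ω = E.indicator (fun _ => T) ω + max 0 (Af ω - T) := fun ω => by
      by_cases hωE : ω ∈ E
      · have hgt : T < Af ω := alg_gt_T hk hωE
        rw [Set.indicator_of_mem hωE, max_eq_right (by linarith)]
        ring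
      · have hAf0 : Af ω = 0 := by
          show maxVal (acceptSet k T (fun i => v i ω)) (fun i => v i ω) = 0
          rw [acceptSet_eq_empty hωE]
          exact maxVal_empty _
        rw [Set.indicator_of_notMem hωE, hAf0, max_eq_left (by linarith)]
        ring
    calc ∫ ω, Af ω ∂μ = ∫ ω, (E.indicator (fun _ => T) ω + max 0 (Af ω - T)) ∂μ :=
        integral_congr_ae (ae_of_all _ hpt)
    _ = (∫ ω, E.indicator (fun _ => T) ω ∂μ) + ∫ ω, max 0 (Af ω - T) ∂μ :=
        integral_add ((integrable_const T).indicator hEmeas) hAT_int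
    _ = T * (μ E).toReal + G.toReal := by
        rw [integral_indicator_const T hEmeas, hlayA, smul_eq_mul, measureReal_def, mul_comm]
  have hq_le_δ : ((2:ℝ)/3)^(k-1) ≤ δ := q_le_delta hk
  have hcF : (1 - δ) * F.toReal ≤ G.toReal := by nlinarith [h3]
  calc (1 - δ) * ∫ ω, Mf ω ∂μ ≤ (1 - δ) * (T + F.toReal) :=
      mul_le_mul_of_nonneg_left hMle (by linarith)
  _ = (1 - δ) * T + (1 - δ) * F.toReal := by ring
  _ ≤ (1 - (2/3:ℝ)^(k-1)) * T + G.toReal := by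
      have h5 : (1 - δ) * T ≤ (1 - (2/3:ℝ)^(k-1)) * T :=
        mul_le_mul_of_nonneg_right (by linarith) hTpos.le
      linarith
  _ = T * (μ E).toReal + G.toReal := by rw [hEq]; ring
  _ = ∫ ω, Af ω ∂μ := hAeq.symm
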